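/- Let M and X be d×d complex matrices with X of rank k, and let M_k = M P where P is the orthogonal projection onto the column space (support) of X restricted so that M_k has rank at most k. Then the product of the k largest singular values of M_k X equals the product of the k largest singular values of M_k times the product of the k largest (i.e., all nonzero) singular values of X. -/

import Mathlib

open Matrix ComplexOrder

/-- The (unordered) singular values of a square complex matrix `A`: the square roots
of the eigenvalues of `Aᴴ * A`. -/
noncomputable def singVal {d : ℕ} (A : Matrix (Fin d) (Fin d) ℂ) (i : Fin d) : ℝ :=
  Real.sqrt (((Matrix.posSemidef_conjTranspose_mul_self A).isHermitian).eigenvalues i)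

/-- `s` enumerates the singular values of `A` in non-increasing order. -/
def IsSortedSingVal {d : ℕ} (A : Matrix (Fin d) (Fin d) ℂ) (s : Fin d → ℝ) : Prop :=
  Antitone s ∧ ∃ σ : Equiv.Perm (Fin d), ∀ i, s i = singVal A (σ i)

section Aux

open Polynomial

lemma eval_charpoly'' {m : Type*} [Fintype m] [DecidableEq m] (M : Matrix m m ℂ) (x : ℂ) :
    (M.charpoly).eval x = det (x • (1 : Matrix m m ℂ) - M) := by
  rw [Matrix.charpoly, ← Polynomial.coe_evalRingHom, RingHom.map_det]
  congr 1
  ext i j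
  by_cases h : i = j <;>
    simp [h, charmatrix_apply_eq, charmatrix_apply_ne, Matrix.sub_apply, Matrix.smul_apply,
      Matrix.one_apply, Ne.symm]

lemma charpoly_mul_comm_rect {m n : Type*} [Fintype m] [Fintype n] [DecidableEq m] [DecidableEq n]
    (A : Matrix m n ℂ) (B : Matrix n m ℂ) :
    X ^ (Fintype.card n) * (A * B).charpoly = X ^ (Fintype.card m) * (B * A).charpoly := by
  apply Polynomial.eq_of_infinite_eval_eq
  have hsub : {x : ℂ | x ≠ 0} ⊆ {x | eval x (X ^ Fintype.card n * (A * B).charpoly)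
      = eval x (X ^ Fintype.card m * (B * A).charpoly)} := by
    intro x hx
    have hx : x ≠ 0 := hx
    letI : Invertible (x • (1 : Matrix m m ℂ)) :=
      ⟨x⁻¹ • 1, by simp [smul_smul, hx], by simp [smul_smul, hx]⟩
    have h22 : (fromBlocks (x • (1 : Matrix m m ℂ)) A B (1 : Matrix n n ℂ)).det
        = det (x • (1 : Matrix m m ℂ) - A * B) := by
      haveI : Invertible (1 : Matrix n n ℂ) := invertibleOne
      rw [det_fromBlocks₂₂]
      simp
    have h11 : (fromBlocks (x • (1 : Matrix m m ℂ)) A B (1 : Matrix n n ℂ)).det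
        = x ^ Fintype.card m * ((x⁻¹) ^ Fintype.card n * det (x • (1 : Matrix n n ℂ) - B * A)) := by
      rw [det_fromBlocks₁₁]
      have hinv : ⅟(x • (1 : Matrix m m ℂ)) = x⁻¹ • 1 := rfl
      rw [hinv]
      have h1 : (1 : Matrix n n ℂ) - B * (x⁻¹ • (1 : Matrix m m ℂ)) * A
          = x⁻¹ • (x • (1 : Matrix n n ℂ) - B * A) := by
        rw [smul_sub, smul_smul]
        simp [hx, Matrix.mul_smul, Matrix.smul_mul]
      rw [h1, det_smul, det_smul, det_one, mul_one]
    simp only [Set.mem_setOf_eq, eval_mul, eval_pow, eval_X, eval_charpoly'']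
    rw [← h22, h11]
    field_simp
    rw [← mul_pow, mul_one_div_cancel hx, one_pow, one_mul]
  have hinf : Set.Infinite {x : ℂ | x ≠ 0} := by
    exact (Set.finite_singleton (0:ℂ)).infinite_compl
  exact Set.Infinite.mono hsub hinf

lemma charpoly_mul_comm_rect' {d k : ℕ} (hk : k ≤ d)
    (A : Matrix (Fin d) (Fin k) ℂ) (B : Matrix (Fin k) (Fin d) ℂ) :
    (A * B).charpoly = X ^ (d - k) * (B * A).charpoly := by
  have h := charpoly_mul_comm_rect A B
  simp only [Fintype.card_fin] at h
  have hd : (X : ℂ[X]) ^ d = X ^ k * X ^ (d - k) := by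
    rw [← pow_add, Nat.add_sub_cancel' hk]
  rw [hd, mul_assoc] at h
  exact mul_left_cancel₀ (pow_ne_zero _ Polynomial.X_ne_zero) h

lemma charpoly_hermitian {d : ℕ} {H : Matrix (Fin d) (Fin d) ℂ} (hH : H.IsHermitian) :
    H.charpoly = ∏ i : Fin d, (X - C ((hH.eigenvalues i : ℝ) : ℂ)) := by
  set V : Matrix (Fin d) (Fin d) ℂ := (Matrix.IsHermitian.eigenvectorUnitary hH : Matrix (Fin d) (Fin d) ℂ) with hV
  have hspec := hH.spectral_theorem
  have hVu : star V * V = 1 := Unitary.star_mul_self_of_mem (Matrix.IsHermitian.eigenvectorUnitary hH).2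
  have h1 : H.charpoly = ((V * diagonal (RCLike.ofReal ∘ hH.eigenvalues)) * star V).charpoly := by
    rw [hV]; exact congrArg Matrix.charpoly hspec
  have h2 := charpoly_mul_comm_rect (V * diagonal (RCLike.ofReal ∘ hH.eigenvalues)) (star V)
  simp only [Fintype.card_fin] at h2
  have h3 : star V * (V * diagonal (RCLike.ofReal ∘ hH.eigenvalues))
      = diagonal (RCLike.ofReal ∘ hH.eigenvalues) := by
    rw [← Matrix.mul_assoc, hVu, Matrix.one_mul]
  rw [h3] at h2
  have h4 : ((V * diagonal (RCLike.ofReal ∘ hH.eigenvalues)) * star V).charpoly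
      = (diagonal (RCLike.ofReal ∘ hH.eigenvalues)).charpoly :=
    mul_left_cancel₀ (pow_ne_zero _ Polynomial.X_ne_zero) h2
  rw [h1, h4, Matrix.charpoly_of_upperTriangular _ (Matrix.blockTriangular_diagonal _)]
  refine Finset.prod_congr rfl fun i _ => ?_
  simp [Matrix.diagonal_apply_eq]

lemma det_of_charpoly_eq_prod {k : ℕ} (Cm : Matrix (Fin k) (Fin k) ℂ) (t : Fin k → ℝ)
    (h : Cm.charpoly = ∏ i, (X - C ((t i : ℝ) : ℂ))) :
    Cm.det = ((∏ i, t i : ℝ) : ℂ) := by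
  rw [Matrix.det_eq_sign_charpoly_coeff, h, Fintype.card_fin]
  rw [Polynomial.coeff_zero_eq_eval_zero]
  rw [Polynomial.eval_prod]
  simp only [Polynomial.eval_sub, Polynomial.eval_X, Polynomial.eval_C, zero_sub]
  have hneg : ∏ x : Fin k, -((t x : ℝ) : ℂ) = (-1) ^ k * ∏ x : Fin k, ((t x : ℝ) : ℂ) := by
    calc ∏ x : Fin k, -((t x : ℝ) : ℂ) = ∏ x : Fin k, (-1) * ((t x : ℝ) : ℂ) := by
          exact Finset.prod_congr rfl fun x _ => by ring
      _ = (∏ _x : Fin k, (-1 : ℂ)) * ∏ x : Fin k, ((t x : ℝ) : ℂ) := Finset.prod_mul_distrib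
      _ = (-1) ^ k * ∏ x : Fin k, ((t x : ℝ) : ℂ) := by
          rw [Finset.prod_const, Finset.card_univ, Fintype.card_fin]
  rw [hneg, ← mul_assoc, ← mul_pow]
  push_cast
  simp

lemma charpoly_eq_of_sorted {d k : ℕ} (hk : k ≤ d) (A : Matrix (Fin d) (Fin d) ℂ)
    (hrank : A.rank ≤ k) (s : Fin d → ℝ) (hs : IsSortedSingVal A s) :
    (Aᴴ * A).charpoly
      = X ^ (d - k) * ∏ i : Fin k, (X - C ((((s (Fin.castLE hk i)) ^ 2 : ℝ)) : ℂ)) := by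
  obtain ⟨hanti, σ, hσ⟩ := hs
  have hPSD := Matrix.posSemidef_conjTranspose_mul_self A
  set μ := hPSD.isHermitian.eigenvalues with hμ
  have hμnn : ∀ i, 0 ≤ μ i := fun i => hPSD.eigenvalues_nonneg i
  have hsnn : ∀ i, 0 ≤ s i := fun i => by rw [hσ]; exact Real.sqrt_nonneg _
  have hssq : ∀ i, (s i) ^ 2 = μ (σ i) := fun i => by
    rw [hσ]; exact Real.sq_sqrt (hμnn _)
  have hcard : Fintype.card {i // μ i ≠ 0} ≤ k := by
    rw [← hPSD.isHermitian.rank_eq_card_non_zero_eigs, Matrix.rank_conjTranspose_mul_self]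
    exact hrank
  have hzero : ∀ j : Fin d, k ≤ (j : ℕ) → s j = 0 := by
    intro j hj
    by_contra hne
    have hjpos : 0 < s j := lt_of_le_of_ne (hsnn j) (Ne.symm hne)
    have hlt : ∀ i : Fin (k+1), (i : ℕ) < d := fun i => by
      have := i.isLt
      have := j.isLt
      omega
    have hF : ∀ i : Fin (k+1), μ (σ ⟨(i : ℕ), hlt i⟩) ≠ 0 := by
      intro i
      have hle : (⟨(i : ℕ), hlt i⟩ : Fin d) ≤ j := by
        have := i.isLt
        exact Fin.mk_le_of_le_val (by omega)
      have h1 : s j ≤ s ⟨(i : ℕ), hlt i⟩ := hanti hle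
      have h2 : 0 < s ⟨(i : ℕ), hlt i⟩ := lt_of_lt_of_le hjpos h1
      have h3 := hssq ⟨(i : ℕ), hlt i⟩
      intro h0
      rw [h0] at h3
      nlinarith
    have hinj : Function.Injective (fun i : Fin (k+1) =>
        (⟨σ ⟨(i : ℕ), hlt i⟩, hF i⟩ : {l // μ l ≠ 0})) := by
      intro a b hab
      have h1' : σ ⟨(a : ℕ), hlt a⟩ = σ ⟨(b : ℕ), hlt b⟩ := congrArg Subtype.val hab
      have h2' : (⟨(a : ℕ), hlt a⟩ : Fin d) = ⟨(b : ℕ), hlt b⟩ := σ.injective h1'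
      have h3' : (a : ℕ) = (b : ℕ) := by
        have := congrArg (Fin.val (n := d)) h2'
        simpa using this
      exact Fin.ext h3'
    have := Fintype.card_le_of_injective _ hinj
    rw [Fintype.card_fin] at this
    omega
  have hchar := charpoly_hermitian hPSD.isHermitian
  have hperm : ∏ i : Fin d, (X - C ((μ i : ℝ) : ℂ)) = ∏ i : Fin d, (X - C ((μ (σ i) : ℝ) : ℂ)) :=
    (Equiv.prod_comp σ fun i => (X - C ((μ i : ℝ) : ℂ))).symm
  have hform : ∏ i : Fin d, (X - C ((μ (σ i) : ℝ) : ℂ))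
      = ∏ i : Fin d, (X - C ((((s i) ^ 2 : ℝ)) : ℂ)) :=
    Finset.prod_congr rfl fun i _ => by rw [hssq]
  set F : ℕ → Polynomial ℂ :=
    fun j => if h : j < d then (X - C ((((s ⟨j, h⟩) ^ 2 : ℝ)) : ℂ)) else 1 with hFdef
  have h5 : ∏ i : Fin d, (X - C ((((s i) ^ 2 : ℝ)) : ℂ)) = ∏ j ∈ Finset.range d, F j := by
    rw [← Fin.prod_univ_eq_prod_range]
    refine Finset.prod_congr rfl fun i _ => ?_
    simp only [hFdef, i.isLt, dif_pos, Fin.eta]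
  have h6 : ∏ j ∈ Finset.range d, F j
      = (∏ j ∈ Finset.range k, F j) * ∏ j ∈ Finset.range (d - k), F (k + j) := by
    have hd' : Finset.range d = Finset.range (k + (d - k)) := by
      congr 1
      omega
    rw [hd']
    exact Finset.prod_range_add F k (d - k)
  have h7 : ∏ j ∈ Finset.range (d - k), F (k + j) = X ^ (d - k) := by
    have hX : ∀ j ∈ Finset.range (d - k), F (k + j) = X := by
      intro j hj
      have hjd : k + j < d := by have := Finset.mem_range.mp hj; omega
      have hz : s ⟨k + j, hjd⟩ = 0 := hzero _ (by simp)
      simp only [hFdef, hjd, dif_pos, hz]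
      norm_num
    rw [Finset.prod_congr rfl hX, Finset.prod_const, Finset.card_range]
  have h8 : ∏ j ∈ Finset.range k, F j
      = ∏ i : Fin k, (X - C ((((s (Fin.castLE hk i)) ^ 2 : ℝ)) : ℂ)) := by
    rw [← Fin.prod_univ_eq_prod_range]
    refine Finset.prod_congr rfl fun i _ => ?_
    have hid : (i : ℕ) < d := lt_of_lt_of_le i.isLt hk
    simp only [hFdef, hid, dif_pos]
    rfl
  rw [hchar, hperm, hform, h5, h6, h7, h8, mul_comm]

end Aux

set_option maxHeartbeats 1600000 in
/-- let `X` have rank `k`, `P` be the orthogonal projection onto the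
column space of `X` (so `Pᴴ = P`, `P² = P`, `P.rank = k`, `P * X = X`) and
`Mk = M * P`.  Then the product of the `k` largest singular values of `Mk * X`
equals the product of the `k` largest singular values of `Mk` times the product of
the `k` largest (i.e. all nonzero) singular values of `X`. -/
theorem prod_top_singVal_mul (d k : ℕ) (hk : k ≤ d)
    (M X P Mk : Matrix (Fin d) (Fin d) ℂ)
    (hXrank : X.rank = k)
    (hPherm : Pᴴ = P) (hPidem : P * P = P) (hPrank : P.rank = k)
    (hPX : P * X = X) (hMk : Mk = M * P)
    (sMkX sMk sX : Fin d → ℝ)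
    (h1 : IsSortedSingVal (Mk * X) sMkX)
    (h2 : IsSortedSingVal Mk sMk)
    (h3 : IsSortedSingVal X sX) :
    ∏ i : Fin k, sMkX (Fin.castLE hk i) =
      (∏ i : Fin k, sMk (Fin.castLE hk i)) * ∏ i : Fin k, sX (Fin.castLE hk i) := by
  classical
  have hP : P.IsHermitian := hPherm
  set V : Matrix (Fin d) (Fin d) ℂ := (hP.eigenvectorUnitary : Matrix (Fin d) (Fin d) ℂ) with hVdef
  set μ := hP.eigenvalues with hμdef
  set gg : Fin d → ℂ := ((RCLike.ofReal ∘ μ) : Fin d → ℂ) with hggdef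
  have hVu : star V * V = 1 := Unitary.star_mul_self_of_mem hP.eigenvectorUnitary.2
  have hVu' : V * star V = 1 := Unitary.mul_star_self_of_mem hP.eigenvectorUnitary.2
  have hspec : P = V * diagonal gg * star V := hP.spectral_theorem
  have hVl : ∀ C : Matrix (Fin d) (Fin d) ℂ, star V * (V * C) = C := fun C => by
    rw [← Matrix.mul_assoc, hVu, Matrix.one_mul]
  have hVr : ∀ C : Matrix (Fin d) (Fin d) ℂ, V * (star V * C) = C := fun C => by
    rw [← Matrix.mul_assoc, hVu', Matrix.one_mul]
  -- eigenvalues of P are 0 or 1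
  have hDD : diagonal gg * diagonal gg
      = diagonal gg := by
    have h2' : star V * (P * P) * V = star V * P * V := by rw [hPidem]
    rw [hspec] at h2'
    simp only [Matrix.mul_assoc, hVl, hVu, Matrix.mul_one] at h2'
    simpa [Matrix.mul_assoc] using h2'
  have hμ01 : ∀ i, μ i = 0 ∨ μ i = 1 := by
    intro i
    rw [Matrix.diagonal_mul_diagonal] at hDD
    have h := congrArg (fun Q => Q i i) hDD
    simp only [Matrix.diagonal_apply_eq, Function.comp_apply, Pi.mul_apply] at h
    have h' : (μ i : ℂ) * (μ i : ℂ) = (μ i : ℂ) := h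
    have hz : (μ i : ℂ) * ((μ i : ℂ) - 1) = 0 := by linear_combination h'
    rcases mul_eq_zero.mp hz with h0 | h1'
    · left; exact_mod_cast h0
    · right
      have := sub_eq_zero.mp h1'
      exact_mod_cast this
  have hcard : Fintype.card {i // μ i ≠ 0} = k := by
    have := hP.rank_eq_card_non_zero_eigs
    rw [hPrank] at this
    exact this.symm
  let e : Fin k ≃ {i // μ i ≠ 0} := (Fintype.equivFinOfCardEq hcard).symm
  let f : Fin k → Fin d := fun j => ((e j : {i // μ i ≠ 0}) : Fin d)
  have hfinj : Function.Injective f := fun a b hab => e.injective (Subtype.ext hab)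
  set U : Matrix (Fin d) (Fin k) ℂ := V.submatrix id f with hUdef
  have hUU : Uᴴ * U = 1 := by
    rw [hUdef, Matrix.conjTranspose_submatrix]
    have h := Matrix.submatrix_mul_equiv Vᴴ V f (Equiv.refl (Fin d)) f
    simp only [Equiv.coe_refl] at h
    rw [h]
    rw [show Vᴴ * V = 1 from by rw [← Matrix.star_eq_conjTranspose, hVu]]
    exact Matrix.submatrix_one f hfinj
  have hUUH : U * Uᴴ = P := by
    ext i j
    have hL : (U * Uᴴ) i j = ∑ a : Fin k, V i (f a) * (star V) (f a) j := by
      rw [Matrix.mul_apply]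
      refine Finset.sum_congr rfl fun a _ => ?_
      simp [hUdef, Matrix.conjTranspose_apply, Matrix.submatrix_apply, Matrix.star_apply]
    have hR : P i j = ∑ l : Fin d, V i l * gg l * (star V) l j := by
      rw [hspec, Matrix.mul_apply]
      refine Finset.sum_congr rfl fun l _ => ?_
      rw [Matrix.mul_diagonal]
    rw [hL, hR]
    have hsub : ∑ l : Fin d, V i l * gg l * (star V) l j
        = ∑ l ∈ Finset.univ.filter (fun l => μ l ≠ 0),
            V i l * gg l * (star V) l j := by
      refine (Finset.sum_subset (Finset.filter_subset _ _) ?_).symm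
      intro x _ hx
      simp only [Finset.mem_filter, Finset.mem_univ, true_and, not_not] at hx
      have hgz : gg x = 0 := by rw [hggdef]; simp [hx]
      simp [hgz]
    rw [hsub]
    rw [Finset.sum_subtype (p := fun l => μ l ≠ 0)
      (Finset.univ.filter (fun l => μ l ≠ 0)) (fun x => by simp)
      (fun l => V i l * gg l * (star V) l j)]
    rw [← Equiv.sum_comp e (fun x : {l // μ l ≠ 0} =>
      V i (x : Fin d) * gg (x : Fin d) * (star V) (x : Fin d) j)]
    refine (Finset.sum_congr rfl fun a _ => ?_).symm
    have hμ1 : μ (f a) = 1 := by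
      rcases hμ01 (f a) with h0 | h1'
      · exact absurd h0 (e a).2
      · exact h1'
    show V i (f a) * gg (f a) * (star V) (f a) j
      = V i (f a) * (star V) (f a) j
    have hgg1 : gg (f a) = 1 := by rw [hggdef]; simp [hμ1]
    rw [hgg1]
    simp
  -- factorizations
  set A : Matrix (Fin d) (Fin k) ℂ := M * U with hAdef
  set B : Matrix (Fin k) (Fin d) ℂ := Uᴴ * X with hBdef
  have hMkf : Mk = A * Uᴴ := by
    rw [hMk, ← hUUH, hAdef, Matrix.mul_assoc]
  have hXf : X = U * B := by
    rw [hBdef, ← Matrix.mul_assoc, hUUH, hPX]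
  have hMkrank : Mk.rank ≤ k := by
    rw [hMk]
    exact le_trans (Matrix.rank_mul_le_right M P) (le_of_eq hPrank)
  have hMkXrank : (Mk * X).rank ≤ k :=
    le_trans (Matrix.rank_mul_le_right Mk X) (le_of_eq hXrank)
  have hXrank' : X.rank ≤ k := le_of_eq hXrank
  -- charpoly identities
  have hC1 : (Xᴴ * X).charpoly = Polynomial.X ^ (d - k) * (B * Bᴴ).charpoly := by
    have h : Xᴴ * X = Bᴴ * B := by
      rw [hXf, Matrix.conjTranspose_mul, Matrix.mul_assoc, ← Matrix.mul_assoc Uᴴ U, hUU,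
        Matrix.one_mul]
    rw [h]
    exact charpoly_mul_comm_rect' hk Bᴴ B
  have hC2 : (Mkᴴ * Mk).charpoly = Polynomial.X ^ (d-k) * (Aᴴ * A).charpoly := by
    have h : Mkᴴ * Mk = (U * (Aᴴ * A)) * Uᴴ := by
      rw [hMkf, Matrix.conjTranspose_mul, Matrix.conjTranspose_conjTranspose]
      simp only [Matrix.mul_assoc]
    rw [h, charpoly_mul_comm_rect' hk]
    congr 1
    rw [← Matrix.mul_assoc, hUU, Matrix.one_mul]
  have hC3 : ((Mk * X)ᴴ * (Mk * X)).charpoly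
      = Polynomial.X ^ (d-k) * (B * (Bᴴ * (Aᴴ * A))).charpoly := by
    have hAB : Mk * X = A * B := by
      rw [hMkf, hXf, Matrix.mul_assoc, ← Matrix.mul_assoc Uᴴ U, hUU, Matrix.one_mul]
    have h : (Mk * X)ᴴ * (Mk * X) = (Bᴴ * (Aᴴ * A)) * B := by
      rw [hAB, Matrix.conjTranspose_mul]
      simp only [Matrix.mul_assoc]
    rw [h]
    exact charpoly_mul_comm_rect' hk _ B
  have hF1 := charpoly_eq_of_sorted hk X hXrank' sX h3
  have hF2 := charpoly_eq_of_sorted hk Mk hMkrank sMk h2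
  have hF3 := charpoly_eq_of_sorted hk (Mk * X) hMkXrank sMkX h1
  have hG1 : (B * Bᴴ).charpoly
      = ∏ i : Fin k, (Polynomial.X - Polynomial.C (((sX (Fin.castLE hk i))^2 : ℝ) : ℂ)) :=
    mul_left_cancel₀ (pow_ne_zero _ Polynomial.X_ne_zero) (hC1.symm.trans hF1)
  have hG2 : (Aᴴ * A).charpoly
      = ∏ i : Fin k, (Polynomial.X - Polynomial.C (((sMk (Fin.castLE hk i))^2 : ℝ) : ℂ)) :=
    mul_left_cancel₀ (pow_ne_zero _ Polynomial.X_ne_zero) (hC2.symm.trans hF2)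
  have hG3 : (B * (Bᴴ * (Aᴴ * A))).charpoly
      = ∏ i : Fin k, (Polynomial.X - Polynomial.C (((sMkX (Fin.castLE hk i))^2 : ℝ) : ℂ)) :=
    mul_left_cancel₀ (pow_ne_zero _ Polynomial.X_ne_zero) (hC3.symm.trans hF3)
  have hd1 := det_of_charpoly_eq_prod _ _ hG1
  have hd2 := det_of_charpoly_eq_prod _ _ hG2
  have hd3 := det_of_charpoly_eq_prod _ _ hG3
  have hsplit : (B * (Bᴴ * (Aᴴ * A))).det = (B * Bᴴ).det * (Aᴴ * A).det := by
    rw [← Matrix.mul_assoc, Matrix.det_mul]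
  rw [hd1, hd2, hd3] at hsplit
  have hreal : ∏ i : Fin k, (sMkX (Fin.castLE hk i))^2
      = (∏ i : Fin k, (sX (Fin.castLE hk i))^2) * ∏ i : Fin k, (sMk (Fin.castLE hk i))^2 := by
    exact_mod_cast hsplit
  have nn : ∀ {Y : Matrix (Fin d) (Fin d) ℂ} {s : Fin d → ℝ},
      IsSortedSingVal Y s → ∀ i, 0 ≤ s i := by
    rintro Y s ⟨_, σ, hσ⟩ i
    rw [hσ]
    exact Real.sqrt_nonneg _
  have ha : 0 ≤ ∏ i : Fin k, sMkX (Fin.castLE hk i) :=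
    Finset.prod_nonneg fun i _ => nn h1 _
  have hb : 0 ≤ (∏ i : Fin k, sMk (Fin.castLE hk i)) * ∏ i : Fin k, sX (Fin.castLE hk i) :=
    mul_nonneg (Finset.prod_nonneg fun i _ => nn h2 _) (Finset.prod_nonneg fun i _ => nn h3 _)
  have hsq : (∏ i : Fin k, sMkX (Fin.castLE hk i))^2
      = ((∏ i : Fin k, sMk (Fin.castLE hk i)) * ∏ i : Fin k, sX (Fin.castLE hk i))^2 := by
    rw [mul_pow, ← Finset.prod_pow, ← Finset.prod_pow, ← Finset.prod_pow, hreal]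
    ring
  nlinarith [hsq, ha, hb]
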